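/- Let f, g, r, r', S, N be nonzero polynomials in ℤ[x] with (Sf + r)(Sg + r') = N, deg(r) < deg(S), deg(r') < deg(S), and 3·deg(S) ≥ deg(N). Let a, b, q : ℕ → ℚ[x] be sequences with a₀ = S, b₀ = 0, b₁ = 1, satisfying a_{k+2} = a_k − q_{k+1}·a_{k+1} and b_{k+2} = b_k − q_{k+1}·b_{k+1} for all k ≥ 0, with deg(a_{k+1}) < deg(a_k) whenever a_k ≠ 0, and suppose there exists t with a_t = 0. Then there exists an index k such that deg(a_k·f + b_k·g) ≤ deg(S). -/

import Mathlib

open Polynomial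

/-- Under the hypotheses of the polynomial fg-lemma, given Euclidean remainder
sequences a, b over ℚ[x] starting from a₀ = S (viewed in ℚ[x]) that terminate,
there is an index k with deg(a_k·f + b_k·g) ≤ deg S. -/
theorem poly_small_term (f g r r' S N : ℤ[X])
    (hf : f ≠ 0) (hg : g ≠ 0) (hr : r ≠ 0) (hr' : r' ≠ 0) (hS : S ≠ 0) (hN : N ≠ 0)
    (heq : (S * f + r) * (S * g + r') = N)
    (hrS : r.natDegree < S.natDegree) (hr'S : r'.natDegree < S.natDegree)
    (hSN : 3 * S.natDegree ≥ N.natDegree)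
    (a b q : ℕ → ℚ[X])
    (ha0 : a 0 = S.map (Int.castRingHom ℚ)) (hb0 : b 0 = 0) (hb1 : b 1 = 1)
    (ha : ∀ k, a (k + 2) = a k - q (k + 1) * a (k + 1))
    (hb : ∀ k, b (k + 2) = b k - q (k + 1) * b (k + 1))
    (hdec : ∀ k, a k ≠ 0 → (a (k + 1)).degree < (a k).degree)
    (hterm : ∃ t, a t = 0) :
    ∃ k, (a k * f.map (Int.castRingHom ℚ) + b k * g.map (Int.castRingHom ℚ)).degree ≤
      S.degree := by
  classical
  have hinj : Function.Injective ⇑(Int.castRingHom ℚ) := Int.cast_injective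
  set F := f.map (Int.castRingHom ℚ) with hFdef
  set G := g.map (Int.castRingHom ℚ) with hGdef
  have hF0 : F ≠ 0 := (Polynomial.map_ne_zero_iff hinj).2 hf
  have hG0 : G ≠ 0 := (Polynomial.map_ne_zero_iff hinj).2 hg
  have hFnd : F.natDegree = f.natDegree := natDegree_map_eq_of_injective hinj f
  have hGnd : G.natDegree = g.natDegree := natDegree_map_eq_of_injective hinj g
  have hdS : (a 0).degree = S.degree := by
    rw [ha0, degree_map_eq_of_injective hinj]
  have hndS : (a 0).natDegree = S.natDegree := by
    rw [ha0, natDegree_map_eq_of_injective hinj]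
  -- Step 1 : f.natDegree + g.natDegree ≤ S.natDegree
  have hfg : f.natDegree + g.natDegree ≤ S.natDegree := by
    have h1 : S * f + r ≠ 0 := fun h => hN (by rw [← heq, h, zero_mul])
    have h2 : S * g + r' ≠ 0 := fun h => hN (by rw [← heq, h, mul_zero])
    have hSf : S * f ≠ 0 := mul_ne_zero hS hf
    have hSg : S * g ≠ 0 := mul_ne_zero hS hg
    have drf : r.degree < (S * f).degree := by
      rw [degree_eq_natDegree hr, degree_eq_natDegree hSf,
        natDegree_mul hS hf]
      exact_mod_cast lt_of_lt_of_le hrS (Nat.le_add_right _ _)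
    have drg : r'.degree < (S * g).degree := by
      rw [degree_eq_natDegree hr', degree_eq_natDegree hSg,
        natDegree_mul hS hg]
      exact_mod_cast lt_of_lt_of_le hr'S (Nat.le_add_right _ _)
    have d1 : (S * f + r).natDegree = S.natDegree + f.natDegree := by
      rw [natDegree_eq_of_degree_eq (degree_add_eq_left_of_degree_lt drf),
        natDegree_mul hS hf]
    have d2 : (S * g + r').natDegree = S.natDegree + g.natDegree := by
      rw [natDegree_eq_of_degree_eq (degree_add_eq_left_of_degree_lt drg),
        natDegree_mul hS hg]
    have dN : N.natDegree = S.natDegree + f.natDegree + (S.natDegree + g.natDegree) := by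
      rw [← heq, natDegree_mul h1 h2, d1, d2]
    omega
  -- Choose minimal k with small a k
  have hex : ∃ k, (a k).degree + F.degree ≤ S.degree := by
    obtain ⟨t, ht⟩ := hterm
    exact ⟨t, by rw [ht, degree_zero]; simp⟩
  set k := Nat.find hex with hk
  have hQk : (a k).degree + F.degree ≤ S.degree := Nat.find_spec hex
  have hmin : ∀ j < k, ¬ ((a j).degree + F.degree ≤ S.degree) := fun j hj => Nat.find_min hex hj
  have hne : ∀ j < k, a j ≠ 0 := by
    intro j hj h0
    exact hmin j hj (by rw [h0, degree_zero]; simp)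
  -- monotonicity of degrees on [0, k]
  have hmono : ∀ i j : ℕ, i ≤ j → j ≤ k → (a j).degree ≤ (a i).degree := by
    intro i j hij hjk
    induction j, hij using Nat.le_induction with
    | base => exact le_rfl
    | succ n hn ih =>
      exact le_trans (hdec n (hne n (by omega))).le (ih (by omega))
  -- the degree invariant for b
  have hB : ∀ m, m < k → (b (m + 1)).degree + (a m).degree ≤ S.degree := by
    intro m
    induction m using Nat.strong_induction_on with
    | _ m ih =>
      intro hm
      match m with
      | 0 =>
        rw [hb1, degree_one, zero_add, hdS]
      | Nat.succ j =>
        have hj1k : j + 1 < k := hm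
        rw [hb j]
        have hqa : (q (j + 1) * a (j + 1)).degree ≤ (a j).degree := by
          have hqe : q (j + 1) * a (j + 1) = a j - a (j + 2) := by
            rw [ha j]; ring
          rw [hqe]
          refine le_trans (degree_sub_le _ _) (max_le le_rfl ?_)
          exact hmono j (j + 2) (by omega) (by omega)
        have hBcase : (b j - q (j + 1) * b (j + 1)).degree ≤
            max (b j).degree ((q (j + 1)).degree + (b (j + 1)).degree) := by
          refine le_trans (degree_sub_le _ _) ?_
          rw [degree_mul]
        refine le_trans (add_le_add_left hBcase _) ?_
        rw [← max_add_add_right]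
        refine max_le ?_ ?_
        · -- (b j).degree + (a (j+1)).degree ≤ S.degree
          match j with
          | 0 => rw [hb0, degree_zero]; simp
          | Nat.succ i =>
            have := ih i (by omega) (by omega)
            refine le_trans (add_le_add_right (hmono i (i + 2) (by omega) (by omega)) _) this
        · -- (q (j+1)).degree + (b (j+1)).degree + (a (j+1)).degree ≤ S.degree
          have h1 : (q (j + 1)).degree + (b (j + 1)).degree + (a (j + 1)).degree
              = (b (j + 1)).degree + (q (j + 1) * a (j + 1)).degree := by
            rw [degree_mul]
            rw [add_comm ((q (j+1)).degree) ((b (j+1)).degree), add_assoc]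
          rw [h1]
          refine le_trans (add_le_add_right hqa _) ?_
          exact ih j (by omega) (by omega)
  -- conclusion
  refine ⟨k, le_trans (degree_add_le _ _) (max_le ?_ ?_)⟩
  · rw [degree_mul]; exact hQk
  · match hk2 : k with
    | 0 => rw [hb0, zero_mul, degree_zero]; exact bot_le
    | Nat.succ j =>
      by_cases hbk : b (j + 1) = 0
      · rw [hbk, zero_mul, degree_zero]; exact bot_le
      have haj : a j ≠ 0 := hne j (by omega)
      have hBk := hB j (by omega)
      have hnotj := hmin j (by omega)
      rw [degree_eq_natDegree hbk, degree_eq_natDegree haj, degree_eq_natDegree hS] at hBk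
      have hBk' : (b (j + 1)).natDegree + (a j).natDegree ≤ S.natDegree := by
        exact_mod_cast hBk
      have hnotj' : S.natDegree < (a j).natDegree + f.natDegree := by
        by_contra hcon
        push_neg at hcon
        refine hnotj ?_
        rw [degree_eq_natDegree haj, degree_eq_natDegree hF0, degree_eq_natDegree hS, hFnd]
        exact_mod_cast hcon
      have hfin : (b (j + 1)).natDegree + g.natDegree ≤ S.natDegree := by omega
      rw [degree_mul, degree_eq_natDegree hbk, degree_eq_natDegree hG0,
        degree_eq_natDegree hS, hGnd]
      exact_mod_cast hfin
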